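/- Let n ≥ 2 and let K be the Cauchy–Szegő kernel on the quaternionic Heisenberg group 𝓗^{n−1}, viewed as a function on ℝ³ × ℝ^{4(n−1)}. Then there exists a constant C > 0 (depending only on n) such that for every l = 0,…,n−2, every j = 1,…,4, and every g = (t,y) ≠ 0, |Y_{4l+j}K(g)| ≤ C·(|y|⁴ + |t|²)^{−(Q+1)/4}, i.e. |Y_{4l+j}K(g)| ≤ C·ρ(g,0)^{−(Q+1)}, where Q = 4n+2. -/

import Mathlib

noncomputable section

/-- The quaternionic Heisenberg group `𝓗^{n−1}` identified with
`ℝ³ × ℝ^{4(n−1)}`, with coordinates `(t₁,t₂,t₃, y₁,…,y_{4n−4})`. -/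
abbrev G (n : ℕ) := (Fin 3 → ℝ) × (Fin (4 * (n - 1)) → ℝ)

/-- The matrices `b¹, b², b³` from the multiplication law of the quaternionic
Heisenberg group. -/
def bmat : Fin 3 → Matrix (Fin 4) (Fin 4) ℝ :=
  ![!![0, 1, 0, 0; -1, 0, 0, 0; 0, 0, 0, -1; 0, 0, 1, 0],
    !![0, 0, 1, 0; 0, 0, 0, 1; -1, 0, 0, 0; 0, -1, 0, 0],
    !![0, 0, 0, 1; 0, 0, -1, 0; 0, 1, 0, 0; -1, 0, 0, 0]]

/-- The index `4l + j` (0-based: `l = 0,…,n−2`, `j = 0,…,3` corresponds to the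
coordinate `y_{4l+j+1}`). -/
def yidx (n : ℕ) (l : Fin (n - 1)) (j : Fin 4) : Fin (4 * (n - 1)) :=
  ⟨4 * (l : ℕ) + (j : ℕ), by have := l.isLt; have := j.isLt; omega⟩

/-- The left-invariant vector field
`Y_{4l+j}f = ∂f/∂y_{4l+j} + 2 Σ_{α=1}^3 Σ_{k=1}^4 b^α_{kj}·y_{4l+k}·∂f/∂t_α`. -/
def Yf {n : ℕ} {E : Type*} [NormedAddCommGroup E] [NormedSpace ℝ E]
    (l : Fin (n - 1)) (j : Fin 4) (f : G n → E) (g : G n) : E :=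
  fderiv ℝ f g (0, Pi.single (yidx n l j) 1)
    + (2 : ℝ) • ∑ α : Fin 3, ∑ k : Fin 4,
        (bmat α k j * g.2 (yidx n l k)) • fderiv ℝ f g (Pi.single α 1, 0)

/-- The group product of `𝓗^{n−1}` in real coordinates:
`(t,y)·(t',y') = (t_α + t'_α + 2Σ_{l,j,k} b^α_{kj} y_{4l+k} y'_{4l+j}, y + y')`. -/
def qmulC (n : ℕ) (g h : G n) : G n :=
  (fun α => g.1 α + h.1 α + 2 * ∑ l : Fin (n - 1), ∑ j : Fin 4, ∑ k : Fin 4,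
      bmat α k j * g.2 (yidx n l k) * h.2 (yidx n l j),
   g.2 + h.2)

/-- The group inverse `(t,y)⁻¹ = (−t,−y)` in coordinates. -/
def qinvC (n : ℕ) (g : G n) : G n := (-g.1, -g.2)

/-- The homogeneous norm `‖(t,y)‖ = (|y|⁴ + |t|²)^{1/4}` in coordinates. -/
def hnormC (n : ℕ) (g : G n) : ℝ :=
  ((∑ i, g.2 i ^ 2) ^ 2 + ∑ α, g.1 α ^ 2) ^ ((1 : ℝ) / 4)

/-- The quasi-distance `ρ(h,g) = ‖g⁻¹·h‖` in coordinates. -/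
def qdistC (n : ℕ) (h g : G n) : ℝ := hnormC n (qmulC n (qinvC n g) h)

open Quaternion

/-- The normalized Cauchy–Szegő kernel density: `s(σ)` is the `(2n−2)`-nd
derivative at `x = Re σ` of `x ↦ conj(x + Im σ)·(x² + |Im σ|²)^{−2}`. -/
def sker (n : ℕ) (σ : ℍ[ℝ]) : ℍ[ℝ] :=
  iteratedDeriv (2 * n - 2)
    (fun x : ℝ => ((x ^ 2 + ‖σ.im‖ ^ 2) ^ 2)⁻¹ • star ((x : ℍ[ℝ]) + σ.im)) σ.re

/-- The Cauchy–Szegő kernel in real coordinates: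
`K(t,y) = s(|y|² + t₁𝐢 + t₂𝐣 + t₃𝐤)`. -/
def KkerC (n : ℕ) (g : G n) : ℍ[ℝ] :=
  sker n ⟨∑ i, g.2 i ^ 2, g.1 0, g.1 1, g.1 2⟩


namespace CSaux
open Quaternion

/-- Smoothness index `∞`. -/
local notation "∞" => (⊤ : ℕ∞)

lemma contDiff_re : ContDiff ℝ ∞ (fun q : ℍ[ℝ] => q.re) :=
  (LinearMap.toContinuousLinearMap
    (show ℍ[ℝ] →ₗ[ℝ] ℝ from QuaternionAlgebra.reₗ _ _ _)).contDiff

lemma contDiff_coeH : ContDiff ℝ ∞ (fun x : ℝ => (x : ℍ[ℝ])) :=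
  (LinearMap.toContinuousLinearMap
    (show ℝ →ₗ[ℝ] ℍ[ℝ] from Algebra.linearMap ℝ ℍ[ℝ])).contDiff

lemma contDiff_im : ContDiff ℝ ∞ (fun q : ℍ[ℝ] => q.im) := by
  have h : (fun q : ℍ[ℝ] => q.im) = fun q => q - ((q.re : ℝ) : ℍ[ℝ]) := by
    funext q; ext <;> simp
  rw [h]; exact contDiff_id.sub (contDiff_coeH.comp contDiff_re)

lemma contDiff_star : ContDiff ℝ ∞ (fun q : ℍ[ℝ] => star q) := by
  have h : (fun q : ℍ[ℝ] => star q) = fun q => ((q.re : ℝ) : ℍ[ℝ]) - q.im := by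
    funext q; ext <;> simp
  rw [h]; exact (contDiff_coeH.comp contDiff_re).sub contDiff_im

/-- The base function whose iterated `x`-derivatives give the kernel density. -/
def F : ℝ × ℍ[ℝ] → ℍ[ℝ] := fun p =>
  ((p.1 ^ 2 + ‖p.2.im‖ ^ 2) ^ 2)⁻¹ • star ((p.1 : ℍ[ℝ]) + p.2.im)

/-- The open set where `F` is smooth. -/
def U : Set (ℝ × ℍ[ℝ]) := {p | p.1 ^ 2 + ‖p.2.im‖ ^ 2 ≠ 0}

lemma contDiff_base : ContDiff ℝ ∞ (fun p : ℝ × ℍ[ℝ] => p.1 ^ 2 + ‖p.2.im‖ ^ 2) := by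
  have him : ContDiff ℝ ∞ (fun p : ℝ × ℍ[ℝ] => p.2.im) := contDiff_im.comp contDiff_snd
  have h2 : ContDiff ℝ ∞ (fun p : ℝ × ℍ[ℝ] => ‖p.2.im‖ ^ 2) := by
    have heq : (fun p : ℝ × ℍ[ℝ] => ‖p.2.im‖ ^ 2)
        = fun p : ℝ × ℍ[ℝ] => inner (𝕜 := ℝ) p.2.im p.2.im := by
      funext p; rw [real_inner_self_eq_norm_sq]
    rw [heq]; exact ContDiff.inner ℝ him him
  exact (contDiff_fst.pow 2).add h2

lemma isOpen_U : IsOpen U :=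
  isOpen_ne.preimage contDiff_base.continuous

lemma contDiffOn_F : ContDiffOn ℝ ∞ F U := by
  have h2 : ContDiff ℝ ∞ (fun p : ℝ × ℍ[ℝ] => star ((p.1 : ℍ[ℝ]) + p.2.im)) :=
    contDiff_star.comp ((contDiff_coeH.comp contDiff_fst).add (contDiff_im.comp contDiff_snd))
  exact (((contDiff_base.contDiffOn.pow 2).inv fun p hp => pow_ne_zero 2 hp).smul
    h2.contDiffOn)

/-- Iterated partial derivative of `F` in the first variable. -/
def P : ℕ → ℝ × ℍ[ℝ] → ℍ[ℝ]
  | 0 => F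
  | (k+1) => fun p => fderiv ℝ (P k) p (1, 0)

lemma contDiffOn_P (k : ℕ) : ContDiffOn ℝ ∞ (P k) U := by
  induction k with
  | zero => exact contDiffOn_F
  | succ k ih =>
    exact (ih.fderiv_of_isOpen isOpen_U (by simp)).clm_apply contDiffOn_const

lemma diffAt_P (k : ℕ) {p : ℝ × ℍ[ℝ]} (hp : p ∈ U) : DifferentiableAt ℝ (P k) p :=
  ((contDiffOn_P k).differentiableOn (by simp)).differentiableAt
    (isOpen_U.mem_nhds hp)

end CSaux

namespace CSaux
open Quaternion

local notation "∞" => (⊤ : ℕ∞)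

lemma iter_eq (σ : ℍ[ℝ]) (k : ℕ) {x : ℝ} (hx : x ^ 2 + ‖σ.im‖ ^ 2 ≠ 0) :
    iteratedDeriv k
      (fun x : ℝ => ((x ^ 2 + ‖σ.im‖ ^ 2) ^ 2)⁻¹ • star ((x : ℍ[ℝ]) + σ.im)) x
      = P k (x, σ) := by
  induction k generalizing x with
  | zero => simp only [iteratedDeriv_zero]; rfl
  | succ k ih =>
    rw [iteratedDeriv_succ]
    have hV : IsOpen {y : ℝ | y ^ 2 + ‖σ.im‖ ^ 2 ≠ 0} :=
      isOpen_ne.preimage (by continuity)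
    have hev : iteratedDeriv k
        (fun x : ℝ => ((x ^ 2 + ‖σ.im‖ ^ 2) ^ 2)⁻¹ • star ((x : ℍ[ℝ]) + σ.im))
        =ᶠ[nhds x] (fun y => P k (y, σ)) :=
      Filter.eventuallyEq_of_mem (hV.mem_nhds hx) (fun y hy => ih hy)
    rw [hev.deriv_eq]
    have hmem : ((x, σ) : ℝ × ℍ[ℝ]) ∈ U := hx
    have h1 : HasFDerivAt (P k) (fderiv ℝ (P k) (x, σ)) (x, σ) :=
      (diffAt_P k hmem).hasFDerivAt
    have h2 : HasDerivAt (fun y : ℝ => ((y, σ) : ℝ × ℍ[ℝ])) ((1:ℝ), (0:ℍ[ℝ])) x :=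
      (hasDerivAt_id x).prodMk (hasDerivAt_const x σ)
    have hd := h1.comp_hasDerivAt x h2
    have : HasDerivAt (fun y : ℝ => P k (y, σ)) (P (k+1) (x, σ)) x := by
      exact hd
    exact this.deriv

lemma sker_eq (n : ℕ) (σ : ℍ[ℝ]) (h : σ.re ^ 2 + ‖σ.im‖ ^ 2 ≠ 0) :
    sker n σ = P (2 * n - 2) (σ.re, σ) :=
  iter_eq σ (2 * n - 2) h

lemma smul_base (c : ℝ) (p : ℝ × ℍ[ℝ]) :
    (c • p).1 ^ 2 + ‖(c • p).2.im‖ ^ 2 = c ^ 2 * (p.1 ^ 2 + ‖p.2.im‖ ^ 2) := by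
  have h1 : (c • p).1 = c * p.1 := rfl
  have h2 : (c • p).2.im = c • p.2.im := by
    have h : (c • p).2 = c • p.2 := rfl
    rw [h]; ext <;> simp
  rw [h1, h2, norm_smul]
  simp [mul_pow, Real.norm_eq_abs, sq_abs]
  ring

lemma smul_mem_U {c : ℝ} (hc : c ≠ 0) {p : ℝ × ℍ[ℝ]} (hp : p ∈ U) : c • p ∈ U := by
  have : (c • p).1 ^ 2 + ‖(c • p).2.im‖ ^ 2 ≠ 0 := by
    rw [smul_base]
    exact mul_ne_zero (pow_ne_zero 2 hc) hp
  exact this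

lemma F_smul {c : ℝ} (hc : c ≠ 0) (p : ℝ × ℍ[ℝ]) : F (c • p) = (c ^ 3)⁻¹ • F p := by
  have h1 : (c • p).1 = c * p.1 := rfl
  have h2 : (c • p).2.im = c • p.2.im := by
    have h : (c • p).2 = c • p.2 := rfl
    rw [h]; ext <;> simp
  have h3 : ((c * p.1 : ℝ) : ℍ[ℝ]) + c • p.2.im = c • ((p.1 : ℍ[ℝ]) + p.2.im) := by
    ext <;> simp
  show ((((c • p).1) ^ 2 + ‖(c • p).2.im‖ ^ 2) ^ 2)⁻¹
      • star (((c • p).1 : ℍ[ℝ]) + (c • p).2.im) = _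
  rw [smul_base, h1, h2, h3, Quaternion.star_smul]
  show _ = (c ^ 3)⁻¹ • (((p.1 ^ 2 + ‖p.2.im‖ ^ 2) ^ 2)⁻¹ • star ((p.1 : ℍ[ℝ]) + p.2.im))
  rw [smul_smul, smul_smul]
  congr 1
  rcases eq_or_ne (p.1 ^ 2 + ‖p.2.im‖ ^ 2) 0 with hB | hB
  · simp [hB]
  · field_simp

lemma P_smul (k : ℕ) {c : ℝ} (hc : 0 < c) :
    ∀ p ∈ U, P k (c • p) = (c ^ (3 + k))⁻¹ • P k p := by
  induction k with
  | zero => intro p _; simpa [P] using F_smul hc.ne' p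
  | succ k ih =>
    intro p hp
    have hcp : c • p ∈ U := smul_mem_U hc.ne' hp
    have h2 : HasFDerivAt (fun q : ℝ × ℍ[ℝ] => c • q)
        (c • ContinuousLinearMap.id ℝ (ℝ × ℍ[ℝ])) p := by
      exact (hasFDerivAt_id p).const_smul c
    have h1 : HasFDerivAt (fun q : ℝ × ℍ[ℝ] => P k (c • q))
        ((fderiv ℝ (P k) (c • p)).comp (c • ContinuousLinearMap.id ℝ (ℝ × ℍ[ℝ]))) p :=
      (diffAt_P k hcp).hasFDerivAt.comp p h2
    have h3 : HasFDerivAt (fun q : ℝ × ℍ[ℝ] => (c ^ (3 + k))⁻¹ • P k q)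
        ((c ^ (3 + k))⁻¹ • fderiv ℝ (P k) p) p :=
      (diffAt_P k hp).hasFDerivAt.const_smul (c ^ (3 + k))⁻¹
    have hev : (fun q : ℝ × ℍ[ℝ] => P k (c • q))
        =ᶠ[nhds p] (fun q => (c ^ (3 + k))⁻¹ • P k q) :=
      Filter.eventuallyEq_of_mem (isOpen_U.mem_nhds hp) (fun q hq => ih q hq)
    have h4 : (fderiv ℝ (P k) (c • p)).comp (c • ContinuousLinearMap.id ℝ (ℝ × ℍ[ℝ]))
        = (c ^ (3 + k))⁻¹ • fderiv ℝ (P k) p := by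
      rw [← h1.fderiv, ← h3.fderiv]; exact hev.fderiv_eq
    have h5 := congrArg (fun L : (ℝ × ℍ[ℝ]) →L[ℝ] ℍ[ℝ] => L ((1:ℝ), (0:ℍ[ℝ]))) h4
    simp only [ContinuousLinearMap.coe_comp', Function.comp_apply,
      ContinuousLinearMap.smul_apply, ContinuousLinearMap.coe_smul',
      Pi.smul_apply, ContinuousLinearMap.coe_id', id_eq] at h5
    have h6 : c • ((1:ℝ), (0:ℍ[ℝ])) = ((c:ℝ), (0:ℍ[ℝ])) := by simp
    rw [h6] at h5
    have h7 : fderiv ℝ (P k) (c • p) ((c:ℝ), (0:ℍ[ℝ]))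
        = c • fderiv ℝ (P k) (c • p) ((1:ℝ), (0:ℍ[ℝ])) := by
      rw [← (fderiv ℝ (P k) (c • p)).map_smul, h6]
    rw [h7] at h5
    show fderiv ℝ (P k) (c • p) ((1:ℝ), (0:ℍ[ℝ]))
        = (c ^ (3 + (k+1)))⁻¹ • fderiv ℝ (P k) p ((1:ℝ), (0:ℍ[ℝ]))
    have := congrArg (fun v => c⁻¹ • v) h5
    simp only [smul_smul] at this
    rw [inv_mul_cancel₀ hc.ne', one_smul] at this
    have hsc : c⁻¹ * (c ^ (3 + k))⁻¹ = (c ^ (3 + (k+1)))⁻¹ := by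
      rw [← mul_inv]; congr 1
      rw [show 3 + (k+1) = (3+k) + 1 by omega, pow_succ]; ring
    rw [this, hsc]

end CSaux

namespace CSaux
open Quaternion

local notation "∞" => (⊤ : ℕ∞)

variable (n : ℕ)

/-- The 4th power of the homogeneous norm. -/
def Ng (g : G n) : ℝ := (∑ i, g.2 i ^ 2) ^ 2 + ∑ α, g.1 α ^ 2

/-- The map packaging `(Re σ, σ)` for `σ = |y|² + t₁𝐢 + t₂𝐣 + t₃𝐤`. -/
def σmap (g : G n) : ℝ × ℍ[ℝ] :=
  (∑ i, g.2 i ^ 2, ⟨∑ i, g.2 i ^ 2, g.1 0, g.1 1, g.1 2⟩)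

lemma base_σmap (g : G n) :
    (σmap n g).1 ^ 2 + ‖(σmap n g).2.im‖ ^ 2 = Ng n g := by
  have h2 : ‖(σmap n g).2.im‖ ^ 2
      = g.1 0 ^ 2 + g.1 1 ^ 2 + g.1 2 ^ 2 := by
    rw [sq, ← normSq_eq_norm_mul_self, normSq_def']
    simp [σmap, Quaternion.im]
  rw [h2]
  show (∑ i, g.2 i ^ 2) ^ 2 + _ = _
  rw [Ng, Fin.sum_univ_three]

lemma Ng_nonneg (g : G n) : 0 ≤ Ng n g := by
  have h1 : (0:ℝ) ≤ ∑ α, g.1 α ^ 2 := Finset.sum_nonneg fun α _ => sq_nonneg _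
  have h2 : (0:ℝ) ≤ (∑ i, g.2 i ^ 2) ^ 2 := sq_nonneg _
  exact add_nonneg h2 h1

lemma Ng_pos {g : G n} (hg : g ≠ 0) : 0 < Ng n g := by
  rcases (Ng_nonneg n g).lt_or_eq with h | h
  · exact h
  exfalso; apply hg
  have h1 : (0:ℝ) ≤ ∑ α, g.1 α ^ 2 := Finset.sum_nonneg fun α _ => sq_nonneg _
  have h2 : (0:ℝ) ≤ (∑ i, g.2 i ^ 2) ^ 2 := sq_nonneg _
  have ht : ∑ α, g.1 α ^ 2 = 0 := by
    have := h.symm; rw [Ng] at this; linarith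
  have hy2 : (∑ i, g.2 i ^ 2) ^ 2 = 0 := by
    have := h.symm; rw [Ng] at this; linarith
  have hy : ∑ i, g.2 i ^ 2 = 0 := by
    exact pow_eq_zero_iff (two_ne_zero) |>.mp hy2
  have ht' : ∀ α, g.1 α = 0 := by
    intro α
    have := (Finset.sum_eq_zero_iff_of_nonneg
      (fun β _ => sq_nonneg (g.1 β))).mp ht α (Finset.mem_univ α)
    exact pow_eq_zero_iff two_ne_zero |>.mp this
  have hy' : ∀ i, g.2 i = 0 := by
    intro i
    have := (Finset.sum_eq_zero_iff_of_nonneg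
      (fun i _ => sq_nonneg (g.2 i))).mp hy i (Finset.mem_univ i)
    exact pow_eq_zero_iff two_ne_zero |>.mp this
  ext x
  · exact ht' x
  · exact hy' x

/-- The open set of nonzero points (as sublevel of `Ng`). -/
def sgood : Set (G n) := {g | Ng n g ≠ 0}

lemma continuous_Ng : Continuous (Ng n) := by
  apply Continuous.add
  · exact (continuous_finset_sum _ fun i _ =>
      ((continuous_apply i).comp continuous_snd).pow 2).pow 2
  · exact continuous_finset_sum _ fun α _ =>
      ((continuous_apply α).comp continuous_fst).pow 2

lemma isOpen_sgood : IsOpen (sgood n) := isOpen_ne.preimage (continuous_Ng n)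

lemma mem_U_σmap {g : G n} (h : Ng n g ≠ 0) : σmap n g ∈ U := by
  show (σmap n g).1 ^ 2 + ‖(σmap n g).2.im‖ ^ 2 ≠ 0
  rw [base_σmap]; exact h

def qI : ℍ[ℝ] := ⟨0,1,0,0⟩
def qJ : ℍ[ℝ] := ⟨0,0,1,0⟩
def qK : ℍ[ℝ] := ⟨0,0,0,1⟩

lemma contDiff_σmap : ContDiff ℝ ∞ (σmap n) := by
  have hy : ContDiff ℝ ∞ (fun g : G n => ∑ i, g.2 i ^ 2) := by
    apply ContDiff.sum
    intro i _
    exact ((contDiff_pi.mp contDiff_id i).comp contDiff_snd).pow 2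
  have ht : ∀ α : Fin 3, ContDiff ℝ ∞ (fun g : G n => g.1 α) := fun α =>
    (contDiff_pi.mp contDiff_id α).comp contDiff_fst
  have hsm : ContDiff ℝ ∞ (fun g : G n => ((∑ i, g.2 i ^ 2 : ℝ) : ℍ[ℝ]) + g.1 0 • qI
        + g.1 1 • qJ + g.1 2 • qK) :=
    (((contDiff_coeH.comp hy).add ((ht 0).smul contDiff_const)).add
      ((ht 1).smul contDiff_const)).add ((ht 2).smul contDiff_const)
  have hfun : (fun g : G n => (σmap n g).2)
      = fun g : G n => ((∑ i, g.2 i ^ 2 : ℝ) : ℍ[ℝ]) + g.1 0 • qI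
        + g.1 1 • qJ + g.1 2 • qK := by
    funext g; ext
    · show (σmap n g).2.re = (∑ i, g.2 i ^ 2 : ℝ) + g.1 0 * 0 + g.1 1 * 0 + g.1 2 * 0; simp [σmap]
    · show (σmap n g).2.imI = (0 : ℝ) + g.1 0 * 1 + g.1 1 * 0 + g.1 2 * 0; simp [σmap]
    · show (σmap n g).2.imJ = (0 : ℝ) + g.1 0 * 0 + g.1 1 * 1 + g.1 2 * 0; simp [σmap]
    · show (σmap n g).2.imK = (0 : ℝ) + g.1 0 * 0 + g.1 1 * 0 + g.1 2 * 1; simp [σmap]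
  have h2 : ContDiff ℝ ∞ (fun g : G n => (σmap n g).2) := by rw [hfun]; exact hsm
  exact hy.prodMk h2

lemma KkerC_eq {g : G n} (h : Ng n g ≠ 0) :
    KkerC n g = P (2 * n - 2) (σmap n g) := by
  have hb : ((σmap n g).2).re ^ 2 + ‖((σmap n g).2).im‖ ^ 2 ≠ 0 := by
    have : ((σmap n g).2).re = (σmap n g).1 := by simp [σmap]
    rw [this, base_σmap]; exact h
  have := sker_eq n (σmap n g).2 hb
  have hre : ((σmap n g).2).re = (σmap n g).1 := by simp [σmap]
  show sker n (σmap n g).2 = _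
  rw [this, hre]

lemma contDiffOn_K : ContDiffOn ℝ ∞ (KkerC n) (sgood n) := by
  have h1 : ContDiffOn ℝ ∞ (fun g => P (2 * n - 2) (σmap n g)) (sgood n) :=
    (contDiffOn_P _).comp (contDiff_σmap n).contDiffOn
      (fun g hg => mem_U_σmap n hg)
  exact h1.congr (fun g hg => KkerC_eq n hg)

lemma diffAt_K {g : G n} (h : Ng n g ≠ 0) : DifferentiableAt ℝ (KkerC n) g :=
  ((contDiffOn_K n).differentiableOn (by simp)).differentiableAt
    ((isOpen_sgood n).mem_nhds h)

/-- The anisotropic dilation `δ_r(t,y) = (r²t, ry)`. -/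
def dil (r : ℝ) (g : G n) : G n := (fun α => r ^ 2 * g.1 α, fun i => r * g.2 i)

lemma σmap_dil (r : ℝ) (g : G n) : σmap n (dil n r g) = (r ^ 2) • σmap n g := by
  have h1 : ∑ i, (r * g.2 i) ^ 2 = r ^ 2 * ∑ i, g.2 i ^ 2 := by
    rw [Finset.mul_sum]; exact Finset.sum_congr rfl fun i _ => by ring
  have hfst : (σmap n (dil n r g)).1 = ((r ^ 2) • σmap n g).1 := by
    show ∑ i, (r * g.2 i) ^ 2 = r ^ 2 * (∑ i, g.2 i ^ 2)
    exact h1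
  have hsnd : (σmap n (dil n r g)).2 = ((r ^ 2) • σmap n g).2 := by
    show (⟨∑ i, (r * g.2 i) ^ 2, r^2 * g.1 0, r^2 * g.1 1, r^2 * g.1 2⟩ : ℍ[ℝ])
        = (r ^ 2) • (⟨∑ i, g.2 i ^ 2, g.1 0, g.1 1, g.1 2⟩ : ℍ[ℝ])
    ext <;> simp [h1]
  exact Prod.ext hfst hsnd

lemma Ng_dil (r : ℝ) (g : G n) : Ng n (dil n r g) = r ^ 4 * Ng n g := by
  have h1 : ∑ i, (r * g.2 i) ^ 2 = r ^ 2 * ∑ i, g.2 i ^ 2 := by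
    rw [Finset.mul_sum]; exact Finset.sum_congr rfl fun i _ => by ring
  show (∑ i, (r * g.2 i) ^ 2) ^ 2 + ∑ α, (r ^ 2 * g.1 α) ^ 2 = _
  rw [h1]
  rw [show ∑ α, (r ^ 2 * g.1 α) ^ 2 = r ^ 4 * ∑ α, g.1 α ^ 2 by
    rw [Finset.mul_sum]; exact Finset.sum_congr rfl fun α _ => by ring]
  rw [Ng]; ring

lemma KkerC_dil {g : G n} (h : Ng n g ≠ 0) {r : ℝ} (hr : 0 < r) :
    KkerC n (dil n r g) = (r ^ (2 * (3 + (2 * n - 2))))⁻¹ • KkerC n g := by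
  have hN' : Ng n (dil n r g) ≠ 0 := by
    rw [Ng_dil]
    exact mul_ne_zero (pow_ne_zero 4 hr.ne') h
  rw [KkerC_eq n hN', KkerC_eq n h, σmap_dil]
  rw [P_smul (2 * n - 2) (by positivity : (0:ℝ) < r ^ 2) _ (mem_U_σmap n h)]
  congr 1
  rw [← pow_mul]

end CSaux

namespace CSaux
open Quaternion

variable (n : ℕ)

/-- The differential of the dilation, as a continuous linear map. -/
def Dr (r : ℝ) : G n →L[ℝ] G n :=
  ((r ^ 2) • (ContinuousLinearMap.fst ℝ (Fin 3 → ℝ) (Fin (4*(n-1)) → ℝ))).prod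
    (r • (ContinuousLinearMap.snd ℝ (Fin 3 → ℝ) (Fin (4*(n-1)) → ℝ)))

lemma dil_eq (r : ℝ) (g : G n) : dil n r g = Dr n r g := rfl

lemma fderiv_K_dil {g : G n} (h : Ng n g ≠ 0) {r : ℝ} (hr : 0 < r) :
    (fderiv ℝ (KkerC n) (dil n r g)).comp (Dr n r)
      = (r ^ (2 * (3 + (2 * n - 2))))⁻¹ • fderiv ℝ (KkerC n) g := by
  have hN' : Ng n (dil n r g) ≠ 0 := by
    rw [Ng_dil]; exact mul_ne_zero (pow_ne_zero 4 hr.ne') h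
  have hK : HasFDerivAt (KkerC n) (fderiv ℝ (KkerC n) (dil n r g)) (dil n r g) :=
    (diffAt_K n hN').hasFDerivAt
  have hD : HasFDerivAt (dil n r) (Dr n r) g := by
    have : dil n r = fun g : G n => Dr n r g := by funext g'; exact dil_eq n r g'
    rw [this]; exact (Dr n r).hasFDerivAt
  have h1 : HasFDerivAt (fun g' => KkerC n (dil n r g'))
      ((fderiv ℝ (KkerC n) (dil n r g)).comp (Dr n r)) g := hK.comp g hD
  have h2 : HasFDerivAt (fun g' => (r ^ (2 * (3 + (2 * n - 2))))⁻¹ • KkerC n g')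
      ((r ^ (2 * (3 + (2 * n - 2))))⁻¹ • fderiv ℝ (KkerC n) g) g :=
    (diffAt_K n h).hasFDerivAt.const_smul (r ^ (2 * (3 + (2 * n - 2))))⁻¹
  have hev : (fun g' => KkerC n (dil n r g'))
      =ᶠ[nhds g] (fun g' => (r ^ (2 * (3 + (2 * n - 2))))⁻¹ • KkerC n g') :=
    Filter.eventuallyEq_of_mem ((isOpen_sgood n).mem_nhds h)
      (fun g' hg' => KkerC_dil n hg' hr)
  rw [← h1.fderiv, ← h2.fderiv]; exact hev.fderiv_eq

lemma fderiv_K_dil_y {g : G n} (h : Ng n g ≠ 0) {r : ℝ} (hr : 0 < r)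
    (v : Fin (4 * (n - 1)) → ℝ) :
    fderiv ℝ (KkerC n) (dil n r g) ((0 : Fin 3 → ℝ), v)
      = (r ^ (2 * (3 + (2 * n - 2)) + 1))⁻¹ • fderiv ℝ (KkerC n) g ((0 : Fin 3 → ℝ), v) := by
  have h4 := congrArg (fun L : G n →L[ℝ] ℍ[ℝ] => L ((0 : Fin 3 → ℝ), v)) (fderiv_K_dil n h hr)
  simp only [ContinuousLinearMap.coe_comp', Function.comp_apply,
    ContinuousLinearMap.coe_smul', Pi.smul_apply] at h4
  have hDv : Dr n r ((0 : Fin 3 → ℝ), v) = r • ((0 : Fin 3 → ℝ), v) := by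
    show ((r ^ 2) • (0 : Fin 3 → ℝ), r • v) = _
    rw [Prod.smul_mk]
    simp
  rw [hDv, (fderiv ℝ (KkerC n) (dil n r g)).map_smul] at h4
  have := congrArg (fun x => r⁻¹ • x) h4
  simp only [smul_smul, inv_mul_cancel₀ hr.ne', one_smul] at this
  rw [this]
  congr 1
  rw [← mul_inv, pow_succ]
  ring

lemma fderiv_K_dil_t {g : G n} (h : Ng n g ≠ 0) {r : ℝ} (hr : 0 < r)
    (w : Fin 3 → ℝ) :
    fderiv ℝ (KkerC n) (dil n r g) (w, (0 : Fin (4 * (n - 1)) → ℝ))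
      = (r ^ (2 * (3 + (2 * n - 2)) + 2))⁻¹
          • fderiv ℝ (KkerC n) g (w, (0 : Fin (4 * (n - 1)) → ℝ)) := by
  have h4 := congrArg (fun L : G n →L[ℝ] ℍ[ℝ] => L (w, (0 : Fin (4 * (n - 1)) → ℝ)))
    (fderiv_K_dil n h hr)
  simp only [ContinuousLinearMap.coe_comp', Function.comp_apply,
    ContinuousLinearMap.coe_smul', Pi.smul_apply] at h4
  have hDv : Dr n r (w, (0 : Fin (4 * (n - 1)) → ℝ))
      = (r ^ 2) • (w, (0 : Fin (4 * (n - 1)) → ℝ)) := by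
    show ((r ^ 2) • w, r • (0 : Fin (4 * (n - 1)) → ℝ)) = _
    rw [Prod.smul_mk]
    simp
  rw [hDv, (fderiv ℝ (KkerC n) (dil n r g)).map_smul] at h4
  have hr2 : (r ^ 2) ≠ 0 := pow_ne_zero 2 hr.ne'
  have := congrArg (fun x => (r ^ 2)⁻¹ • x) h4
  simp only [smul_smul, inv_mul_cancel₀ hr2, one_smul] at this
  rw [this]
  congr 1
  rw [← mul_inv]
  congr 1
  rw [pow_add]
  ring

lemma Yf_dil (l : Fin (n - 1)) (j : Fin 4) {g : G n} (h : Ng n g ≠ 0)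
    {r : ℝ} (hr : 0 < r) :
    Yf l j (KkerC n) (dil n r g)
      = (r ^ (2 * (3 + (2 * n - 2)) + 1))⁻¹ • Yf l j (KkerC n) g := by
  set Q1 := 2 * (3 + (2 * n - 2)) + 1 with hQ1
  rw [Yf, Yf]
  rw [fderiv_K_dil_y n h hr]
  have hterm : ∀ (α : Fin 3) (k : Fin 4),
      (bmat α k j * (dil n r g).2 (yidx n l k))
          • fderiv ℝ (KkerC n) (dil n r g) (Pi.single α 1, 0)
        = (r ^ Q1)⁻¹ • ((bmat α k j * g.2 (yidx n l k))
          • fderiv ℝ (KkerC n) g (Pi.single α 1, 0)) := by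
    intro α k
    have h2 : (dil n r g).2 (yidx n l k) = r * g.2 (yidx n l k) := rfl
    rw [h2, fderiv_K_dil_t n h hr, smul_smul, smul_smul]
    congr 1
    have ha : r ^ (2 * (3 + (2 * n - 2))) ≠ 0 := pow_ne_zero _ hr.ne'
    rw [hQ1, pow_add, pow_add, mul_inv, mul_inv]
    field_simp
  have hsum : ∑ α : Fin 3, ∑ k : Fin 4,
      (bmat α k j * (dil n r g).2 (yidx n l k))
        • fderiv ℝ (KkerC n) (dil n r g) (Pi.single α 1, 0)
      = (r ^ Q1)⁻¹ • ∑ α : Fin 3, ∑ k : Fin 4,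
        (bmat α k j * g.2 (yidx n l k)) • fderiv ℝ (KkerC n) g (Pi.single α 1, 0) := by
    rw [Finset.smul_sum]
    refine Finset.sum_congr rfl fun α _ => ?_
    rw [Finset.smul_sum]
    exact Finset.sum_congr rfl fun k _ => hterm α k
  rw [hsum, smul_comm ((2:ℝ)) ((r ^ Q1)⁻¹), ← smul_add]

end CSaux

namespace CSaux
open Quaternion

variable (n : ℕ)

lemma contOn_fderiv : ContinuousOn (fun g => fderiv ℝ (KkerC n) g) (sgood n) :=
  (contDiffOn_K n).continuousOn_fderiv_of_isOpen (isOpen_sgood n) (by simp)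

lemma contOn_Yf (l : Fin (n - 1)) (j : Fin 4) :
    ContinuousOn (fun g => Yf l j (KkerC n) g) (sgood n) := by
  have hf := contOn_fderiv n
  have h1 : ContinuousOn (fun g : G n => fderiv ℝ (KkerC n) g
      ((0 : Fin 3 → ℝ), Pi.single (yidx n l j) 1)) (sgood n) :=
    (ContinuousLinearMap.apply ℝ ℍ[ℝ]
      ((0 : Fin 3 → ℝ), Pi.single (yidx n l j) 1)).continuous.comp_continuousOn hf
  have hterm : ∀ (α : Fin 3) (k : Fin 4), ContinuousOn (fun g : G n =>
      (bmat α k j * g.2 (yidx n l k)) • fderiv ℝ (KkerC n) g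
        ((Pi.single α 1 : Fin 3 → ℝ), (0 : Fin (4*(n-1)) → ℝ))) (sgood n) := by
    intro α k
    have hc : Continuous fun g : G n => bmat α k j * g.2 (yidx n l k) :=
      continuous_const.mul ((continuous_apply _).comp continuous_snd)
    exact hc.continuousOn.smul
      ((ContinuousLinearMap.apply ℝ ℍ[ℝ] _).continuous.comp_continuousOn hf)
  have h2 : ContinuousOn (fun g : G n => ∑ α : Fin 3, ∑ k : Fin 4,
      (bmat α k j * g.2 (yidx n l k)) • fderiv ℝ (KkerC n) g
        ((Pi.single α 1 : Fin 3 → ℝ), (0 : Fin (4*(n-1)) → ℝ))) (sgood n) := by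
    apply continuousOn_finset_sum
    intro α _
    apply continuousOn_finset_sum
    intro k _
    exact hterm α k
  exact h1.add (h2.const_smul (2:ℝ))

lemma exists_bound : ∃ C : ℝ, 0 < C ∧
    ∀ (l : Fin (n - 1)) (j : Fin 4) (g : G n), Ng n g = 1 →
      ‖Yf l j (KkerC n) g‖ ≤ C := by
  classical
  set S := {g : G n | Ng n g = 1} with hS
  have hSsub : S ⊆ sgood n := by
    intro g hg
    show Ng n g ≠ 0
    rw [Set.mem_setOf_eq] at hg
    rw [hg]; norm_num
  have hclosed : IsClosed S := isClosed_eq (continuous_Ng n) continuous_const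
  have hbdd : S ⊆ Metric.closedBall 0 1 := by
    intro g hg
    rw [Set.mem_setOf_eq] at hg
    have h1 : (0:ℝ) ≤ ∑ α, g.1 α ^ 2 := Finset.sum_nonneg fun α _ => sq_nonneg _
    have h2 : (0:ℝ) ≤ ∑ i, g.2 i ^ 2 := Finset.sum_nonneg fun i _ => sq_nonneg _
    have ht : ∑ α, g.1 α ^ 2 ≤ 1 := by
      have := sq_nonneg (∑ i, g.2 i ^ 2); rw [Ng] at hg; linarith
    have hy : ∑ i, g.2 i ^ 2 ≤ 1 := by
      rw [Ng] at hg; nlinarith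
    rw [Metric.mem_closedBall, dist_zero_right, Prod.norm_def, max_le_iff]
    constructor
    · rw [pi_norm_le_iff_of_nonneg (by norm_num : (0:ℝ) ≤ 1)]
      intro α
      rw [Real.norm_eq_abs]
      have hα : g.1 α ^ 2 ≤ 1 := by
        have := Finset.single_le_sum (fun β (_ : β ∈ Finset.univ) => sq_nonneg (g.1 β))
          (Finset.mem_univ α)
        linarith
      nlinarith [abs_nonneg (g.1 α), sq_abs (g.1 α)]
    · rw [pi_norm_le_iff_of_nonneg (by norm_num : (0:ℝ) ≤ 1)]
      intro i
      rw [Real.norm_eq_abs]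
      have hi : g.2 i ^ 2 ≤ 1 := by
        have := Finset.single_le_sum (fun i' (_ : i' ∈ Finset.univ) => sq_nonneg (g.2 i'))
          (Finset.mem_univ i)
        linarith
      nlinarith [abs_nonneg (g.2 i), sq_abs (g.2 i)]
  have hScompact : IsCompact S :=
    Metric.isCompact_of_isClosed_isBounded hclosed
      (Metric.isBounded_closedBall.subset hbdd)
  have hH : ContinuousOn (fun g : G n =>
      ∑ l : Fin (n-1), ∑ j : Fin 4, ‖Yf l j (KkerC n) g‖) S := by
    apply ContinuousOn.mono _ hSsub
    apply continuousOn_finset_sum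
    intro l _
    apply continuousOn_finset_sum
    intro j _
    exact (contOn_Yf n l j).norm
  obtain ⟨C, hC⟩ := hScompact.exists_bound_of_continuousOn hH
  refine ⟨max C 1, lt_of_lt_of_le one_pos (le_max_right _ _), ?_⟩
  intro l j g hg
  have hsumb : ‖Yf l j (KkerC n) g‖
      ≤ ∑ l' : Fin (n-1), ∑ j' : Fin 4, ‖Yf l' j' (KkerC n) g‖ := by
    calc ‖Yf l j (KkerC n) g‖
        ≤ ∑ j' : Fin 4, ‖Yf l j' (KkerC n) g‖ :=
          Finset.single_le_sum (f := fun j' => ‖Yf l j' (KkerC n) g‖)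
            (fun j' _ => norm_nonneg _) (Finset.mem_univ j)
      _ ≤ ∑ l' : Fin (n-1), ∑ j' : Fin 4, ‖Yf l' j' (KkerC n) g‖ :=
          Finset.single_le_sum (f := fun l' => ∑ j' : Fin 4, ‖Yf l' j' (KkerC n) g‖)
            (fun l' _ => Finset.sum_nonneg fun j' _ => norm_nonneg _)
            (Finset.mem_univ l)
  have hCg := hC g hg
  calc ‖Yf l j (KkerC n) g‖
      ≤ ∑ l' : Fin (n-1), ∑ j' : Fin 4, ‖Yf l' j' (KkerC n) g‖ := hsumb
    _ ≤ ‖∑ l' : Fin (n-1), ∑ j' : Fin 4, ‖Yf l' j' (KkerC n) g‖‖ := le_abs_self _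
    _ ≤ C := hCg
    _ ≤ max C 1 := le_max_left _ _

end CSaux

/-- Gradient estimate for the Cauchy–Szegő kernel: there is `C > 0` (depending
only on `n`) such that for all `l = 0,…,n−2`, `j = 1,…,4` and `g = (t,y) ≠ 0`,
`|Y_{4l+j}K(g)| ≤ C·(|y|⁴+|t|²)^{−(Q+1)/4} = C·ρ(g,0)^{−(Q+1)}`, `Q = 4n+2`. -/
theorem YKker_size_estimate (n : ℕ) (hn : 2 ≤ n) :
    ∃ C : ℝ, 0 < C ∧
      ∀ (l : Fin (n - 1)) (j : Fin 4) (g : G n), g ≠ 0 →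
        ‖Yf l j (KkerC n) g‖ ≤
          C * (((∑ i, g.2 i ^ 2) ^ 2 + ∑ α, g.1 α ^ 2)
              ^ (-((4 * (n : ℝ) + 2 + 1) / 4))) := by
  obtain ⟨C, hC, hbound⟩ := CSaux.exists_bound n
  refine ⟨C, hC, ?_⟩
  intro l j g hg
  have hNgA : CSaux.Ng n g = (∑ i, g.2 i ^ 2) ^ 2 + ∑ α, g.1 α ^ 2 := rfl
  set A : ℝ := (∑ i, g.2 i ^ 2) ^ 2 + ∑ α, g.1 α ^ 2 with hA
  have hApos : 0 < A := by rw [← hNgA]; exact CSaux.Ng_pos n hg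
  set r : ℝ := A ^ ((1:ℝ)/4) with hrdef
  have hrpos : 0 < r := Real.rpow_pos_of_pos hApos _
  have hr4 : r ^ (4:ℕ) = A := by
    rw [hrdef, ← Real.rpow_natCast (A ^ ((1:ℝ)/4)) 4, ← Real.rpow_mul hApos.le]
    norm_num
  set u : G n := CSaux.dil n r⁻¹ g with hu
  have hNu : CSaux.Ng n u = 1 := by
    rw [hu, CSaux.Ng_dil, inv_pow, hr4]
    exact inv_mul_cancel₀ hApos.ne' 
  have hgu : CSaux.dil n r u = g := by
    rw [hu]
    apply Prod.ext
    · funext α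
      show r ^ 2 * ((r⁻¹) ^ 2 * g.1 α) = g.1 α
      field_simp
    · funext i
      show r * (r⁻¹ * g.2 i) = g.2 i
      field_simp
  have hYf : Yf l j (KkerC n) g
      = (r ^ (2*(3+(2*n-2))+1))⁻¹ • Yf l j (KkerC n) u := by
    conv_lhs => rw [← hgu]
    exact CSaux.Yf_dil n l j (by rw [hNu]; norm_num) hrpos
  have hb := hbound l j u hNu
  have hrQ : (r ^ (2*(3+(2*n-2))+1))⁻¹ = A ^ (-((4 * (n : ℝ) + 2 + 1) / 4)) := by
    have hcast : ((2*(3+(2*n-2))+1 : ℕ) : ℝ) = 4 * (n : ℝ) + 3 := by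
      have h2n : (2:ℕ) ≤ 2 * n := by omega
      push_cast [Nat.cast_sub h2n]
      ring
    rw [hrdef, ← Real.rpow_natCast (A ^ ((1:ℝ)/4)) (2*(3+(2*n-2))+1),
      ← Real.rpow_mul hApos.le, hcast, ← Real.rpow_neg hApos.le]
    congr 1
    ring
  rw [hYf, norm_smul, Real.norm_eq_abs,
    abs_of_nonneg (by positivity : (0:ℝ) ≤ (r ^ (2*(3+(2*n-2))+1))⁻¹), hrQ]
  rw [mul_comm]
  exact mul_le_mul_of_nonneg_right hb (Real.rpow_nonneg hApos.le _)
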